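/- Fix α with 3/2 ≤ α ≤ 2, a constant ε with 0 < ε, a constant γ ∈ (0, 1/(4√2)], and channel coefficients h₁₁, h₁₂, h₂₁, h₂₂ ∈ (1, 2]. For P > 1 let Q = P^{(2−α−ε)/2}, and let v₁c, v₂c, u₁, u₂ be independent random variables each uniformly distributed on Ω(2γ/Q, Q), mutually independent and independent of z₁ distributed as the Gaussian measure N(0, 1). Define y₁ = √(P^{2−α})·h₁₁h₂₂·v₁c + √P·h₁₂h₁₁·(v₂c + u₁) + √(P^{α})·h₁₂h₂₁·u₂ + z₁. Then for every η > 0 there exists P₀ such that for all P ≥ P₀ there is a Borel-measurable function f : ℝ → ℝ with ℙ[ f(y₁) = v₁c ] > 1 − η. (Successive decoding recovers v₁c from y₁ with error probability tending to 0 as P → ∞.) -/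

import Mathlib

open MeasureTheory ProbabilityTheory Real

def PAM (ξ Q : ℝ) : Set ℝ :=
  {x | ∃ a : ℤ, x = ξ * a ∧ -Q ≤ (a : ℝ) ∧ (a : ℝ) ≤ Q}

lemma PAM_eq (ξ Q : ℝ) :
    PAM ξ Q = (fun a : ℤ => ξ * a) '' (Set.Icc ⌈-Q⌉ ⌊Q⌋) := by
  ext x
  constructor
  · rintro ⟨a, rfl, h1, h2⟩
    exact ⟨a, Set.mem_Icc.2 ⟨Int.ceil_le.2 h1, Int.le_floor.2 h2⟩, rfl⟩
  · rintro ⟨a, ha, rfl⟩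
    rw [Set.mem_Icc] at ha
    exact ⟨a, rfl, Int.ceil_le.1 ha.1, Int.le_floor.1 ha.2⟩

lemma PAM_finite (ξ Q : ℝ) : (PAM ξ Q).Finite := by
  rw [PAM_eq]; exact (Set.finite_Icc _ _).image _

lemma gauss_exists (η : ℝ) (hη : 0 < η) :
    ∃ n : ℕ, ENNReal.ofReal (1 - η) < gaussianReal 0 1 (Set.Ioo (-(n:ℝ)) (n:ℝ)) := by
  have hmono : Monotone (fun n : ℕ => Set.Ioo (-(n:ℝ)) (n:ℝ)) := by
    intro m n h
    apply Set.Ioo_subset_Ioo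
    · simp only [neg_le_neg_iff]; exact_mod_cast h
    · exact_mod_cast h
  have hU : (⋃ n : ℕ, Set.Ioo (-(n:ℝ)) (n:ℝ)) = Set.univ := by
    ext x
    simp only [Set.mem_iUnion, Set.mem_univ, iff_true, Set.mem_Ioo]
    obtain ⟨n, hn⟩ := exists_nat_gt |x|
    exact ⟨n, (abs_lt.1 hn).1, (abs_lt.1 hn).2⟩
  have ht := tendsto_measure_iUnion_atTop (μ := gaussianReal 0 1) hmono
  rw [hU, measure_univ] at ht
  have hlt : ENNReal.ofReal (1 - η) < 1 := ENNReal.ofReal_lt_one.2 (by linarith)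
  exact (ht.eventually (eventually_gt_nhds hlt)).exists

set_option maxHeartbeats 1600000 in
lemma key_mindist (α ε P : ℝ) (hα₁ : 3/2 ≤ α) (hα₂ : α ≤ 2) (hε : 0 < ε)
    (hP16 : (16:ℝ) ≤ P) (hP48 : (48:ℝ) ≤ P ^ (ε/2))
    (g₁ g₂ g₃ : ℝ) (hg₁ : 1 ≤ g₁) (hg₁' : g₁ ≤ 4) (hg₂ : 1 ≤ g₂) (hg₂' : g₂ ≤ 4)
    (hg₃ : 1 ≤ g₃) (hg₃' : g₃ ≤ 4)
    (va vb vc : ℝ)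
    (hva1 : 1 ≤ |va|) (hva2 : |va| ≤ 2 * P ^ ((2-α-ε)/2))
    (hvb0 : vb = 0 ∨ 1 ≤ |vb|) (hvb2 : |vb| ≤ 4 * P ^ ((2-α-ε)/2))
    (hvc0 : vc = 0 ∨ 1 ≤ |vc|) (hvc2 : |vc| ≤ 2 * P ^ ((2-α-ε)/2)) :
    P ^ ((2-α)/2) ≤
      |P ^ ((2-α)/2) * g₁ * va + P ^ ((1:ℝ)/2) * g₂ * vb + P ^ (α/2) * g₃ * vc| := by
  have hP1 : (1:ℝ) ≤ P := by linarith
  have hP0 : (0:ℝ) < P := by linarith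
  have hpos : ∀ x : ℝ, 0 < P ^ x := fun x => rpow_pos_of_pos hP0 x
  have hmono : ∀ x y : ℝ, x ≤ y → P ^ x ≤ P ^ y := fun x y h =>
    rpow_le_rpow_of_exponent_le hP1 h
  have hadd : ∀ x y : ℝ, P ^ (x + y) = P ^ x * P ^ y := fun x y => rpow_add hP0 x y
  -- |X| bound
  have hX : |P ^ ((2-α)/2) * g₁ * va| ≤ 8 * P ^ ((2-α)/2 + (2-α-ε)/2) := by
    rw [abs_mul, abs_mul, abs_of_nonneg (hpos _).le, abs_of_nonneg (by linarith : (0:ℝ) ≤ g₁)]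
    rw [hadd]
    calc P ^ ((2-α)/2) * g₁ * |va| ≤ P ^ ((2-α)/2) * 4 * (2 * P ^ ((2-α-ε)/2)) := by
          apply mul_le_mul
          · exact mul_le_mul_of_nonneg_left hg₁' (hpos _).le
          · exact hva2
          · positivity
          · positivity
      _ = 8 * (P ^ ((2-α)/2) * P ^ ((2-α-ε)/2)) := by ring
  have hY : |P ^ ((1:ℝ)/2) * g₂ * vb| ≤ 16 * P ^ ((1:ℝ)/2 + (2-α-ε)/2) := by
    rw [abs_mul, abs_mul, abs_of_nonneg (hpos _).le, abs_of_nonneg (by linarith : (0:ℝ) ≤ g₂)]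
    rw [hadd]
    calc P ^ ((1:ℝ)/2) * g₂ * |vb| ≤ P ^ ((1:ℝ)/2) * 4 * (4 * P ^ ((2-α-ε)/2)) := by
          apply mul_le_mul
          · exact mul_le_mul_of_nonneg_left hg₂' (hpos _).le
          · exact hvb2
          · positivity
          · positivity
      _ = 16 * (P ^ ((1:ℝ)/2) * P ^ ((2-α-ε)/2)) := by ring
  -- P ^ (-(ε/2)) ≤ 1/48
  have hsmall : P ^ (-(ε/2)) ≤ 1/48 := by
    rw [rpow_neg hP0.le]
    rw [inv_le_comm₀ (by positivity) (by norm_num)]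
    · linarith
  -- comparison: if x + ε/2 ≤ y then C * P^x ≤ C/48 * P^y
  have hcmp : ∀ x y : ℝ, x + ε/2 ≤ y → P ^ x ≤ (1/48) * P ^ y := by
    intro x y h
    have : P ^ x = P ^ y * P ^ (x - y) := by rw [← hadd]; congr 1; ring
    rw [this]
    have h2 : P ^ (x - y) ≤ P ^ (-(ε/2)) := hmono _ _ (by linarith)
    calc P ^ y * P ^ (x - y) ≤ P ^ y * (1/48) := by
          exact mul_le_mul_of_nonneg_left (h2.trans hsmall) (hpos _).le
      _ = (1/48) * P ^ y := by ring
  have hq : (0:ℝ) < 2 := by norm_num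
  -- P^{1/2} ≥ 4 and P^{1/4} ≥ 2
  have h16half : (16:ℝ) ^ ((1:ℝ)/2) = 4 := by
    rw [show (16:ℝ) = 4 ^ (2:ℕ) by norm_num, ← rpow_natCast (4:ℝ) 2, ← rpow_mul (by norm_num)]
    norm_num
  have hPhalf : (4:ℝ) ≤ P ^ ((1:ℝ)/2) := by
    rw [← h16half]; exact rpow_le_rpow (by norm_num) hP16 (by norm_num)
  have h16q : (16:ℝ) ^ ((1:ℝ)/4) = 2 := by
    rw [show (16:ℝ) = 2 ^ (4:ℕ) by norm_num, ← rpow_natCast (2:ℝ) 4, ← rpow_mul (by norm_num)]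
    norm_num
  have hPq : (2:ℝ) ≤ P ^ ((1:ℝ)/4) := by
    rw [← h16q]; exact rpow_le_rpow (by norm_num) hP16 (by norm_num)
  rcases hvc0 with hvc | hvc
  · rcases hvb0 with hvb | hvb
    · -- vb = vc = 0
      subst hvc; subst hvb
      simp only [mul_zero, add_zero]
      rw [abs_mul, abs_mul, abs_of_nonneg (hpos _).le, abs_of_nonneg (by linarith : (0:ℝ) ≤ g₁)]
      have h1 : (1:ℝ) ≤ g₁ * |va| := by nlinarith
      calc P ^ ((2-α)/2) = P ^ ((2-α)/2) * 1 := by ring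
        _ ≤ P ^ ((2-α)/2) * (g₁ * |va|) := mul_le_mul_of_nonneg_left h1 (hpos _).le
        _ = P ^ ((2-α)/2) * g₁ * |va| := by ring
    · -- vc = 0, vb ≠ 0
      subst hvc
      simp only [mul_zero, add_zero]
      have hYlow : P ^ ((1:ℝ)/2) ≤ |P ^ ((1:ℝ)/2) * g₂ * vb| := by
        rw [abs_mul, abs_mul, abs_of_nonneg (hpos _).le, abs_of_nonneg (by linarith : (0:ℝ) ≤ g₂)]
        have h1 : (1:ℝ) ≤ g₂ * |vb| := by nlinarith
        calc P ^ ((1:ℝ)/2) = P ^ ((1:ℝ)/2) * 1 := by ring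
          _ ≤ P ^ ((1:ℝ)/2) * (g₂ * |vb|) := mul_le_mul_of_nonneg_left h1 (hpos _).le
          _ = P ^ ((1:ℝ)/2) * g₂ * |vb| := by ring
      have h1 : 8 * P ^ ((2-α)/2 + (2-α-ε)/2) ≤ 8 * ((1/48) * P ^ ((1:ℝ)/2)) := by
        have := hcmp ((2-α)/2 + (2-α-ε)/2) ((1:ℝ)/2) (by linarith)
        linarith
      have habs : |P ^ ((1:ℝ)/2) * g₂ * vb| - |P ^ ((2-α)/2) * g₁ * va|
          ≤ |P ^ ((2-α)/2) * g₁ * va + P ^ ((1:ℝ)/2) * g₂ * vb| := by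
        have h0 := abs_sub_abs_le_abs_sub (P ^ ((1:ℝ)/2) * g₂ * vb)
          (-(P ^ ((2-α)/2) * g₁ * va))
        rw [abs_neg, sub_neg_eq_add, add_comm] at h0
        exact h0
      -- need P^{e1} ≤ (5/6) P^{1/2}
      have hfin : P ^ ((2-α)/2) ≤ (5/6) * P ^ ((1:ℝ)/2) := by
        have : P ^ ((1:ℝ)/2) = P ^ ((2-α)/2) * P ^ ((1:ℝ)/2 - (2-α)/2) := by
          rw [← hadd]; congr 1; ring
        have hge : (2:ℝ) ≤ P ^ ((1:ℝ)/2 - (2-α)/2) := by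
          calc (2:ℝ) ≤ P ^ ((1:ℝ)/4) := hPq
            _ ≤ P ^ ((1:ℝ)/2 - (2-α)/2) := hmono _ _ (by linarith)
        have h2' := mul_le_mul_of_nonneg_left hge (hpos ((2-α)/2)).le
        linarith [hpos ((1:ℝ)/2)]
      linarith
  · -- vc ≠ 0
    have hZlow : P ^ (α/2) ≤ |P ^ (α/2) * g₃ * vc| := by
      rw [abs_mul, abs_mul, abs_of_nonneg (hpos _).le, abs_of_nonneg (by linarith : (0:ℝ) ≤ g₃)]
      have h1 : (1:ℝ) ≤ g₃ * |vc| := by nlinarith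
      calc P ^ (α/2) = P ^ (α/2) * 1 := by ring
        _ ≤ P ^ (α/2) * (g₃ * |vc|) := mul_le_mul_of_nonneg_left h1 (hpos _).le
        _ = P ^ (α/2) * g₃ * |vc| := by ring
    have h1 : 8 * P ^ ((2-α)/2 + (2-α-ε)/2) ≤ 8 * ((1/48) * P ^ (α/2)) := by
      have := hcmp ((2-α)/2 + (2-α-ε)/2) (α/2) (by linarith)
      linarith
    have h2 : 16 * P ^ ((1:ℝ)/2 + (2-α-ε)/2) ≤ 16 * ((1/48) * P ^ (α/2)) := by
      have := hcmp ((1:ℝ)/2 + (2-α-ε)/2) (α/2) (by linarith)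
      linarith
    set X := P ^ ((2-α)/2) * g₁ * va
    set Y := P ^ ((1:ℝ)/2) * g₂ * vb
    set Z := P ^ (α/2) * g₃ * vc
    have habs : |Z| - |X| - |Y| ≤ |X + Y + Z| := by
      have h0 := abs_sub_abs_le_abs_sub Z (-(X+Y))
      rw [abs_neg, sub_neg_eq_add] at h0
      have h4 := abs_add_le X Y
      have h5 : Z + (X + Y) = X + Y + Z := by ring
      rw [h5] at h0
      linarith
    have hfin : P ^ ((2-α)/2) ≤ (1/2) * P ^ (α/2) := by
      have heq : P ^ (α/2) = P ^ ((2-α)/2) * P ^ (α/2 - (2-α)/2) := by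
        rw [← hadd]; congr 1; ring
      have hge : (2:ℝ) ≤ P ^ (α/2 - (2-α)/2) := by
        calc (2:ℝ) ≤ 4 := by norm_num
          _ ≤ P ^ ((1:ℝ)/2) := hPhalf
          _ ≤ P ^ (α/2 - (2-α)/2) := hmono _ _ (by linarith)
      have h2' := mul_le_mul_of_nonneg_left hge (hpos ((2-α)/2)).le
      linarith [hpos (α/2)]
    linarith

set_option maxHeartbeats 3000000 in
theorem successive_decoding_regime_three_halves_two
    (α ε γ h₁₁ h₁₂ h₂₁ h₂₂ : ℝ)
    (hα₁ : 3 / 2 ≤ α) (hα₂ : α ≤ 2) (hε : 0 < ε)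
    (hγ₁ : 0 < γ) (hγ₂ : γ ≤ 1 / (4 * Real.sqrt 2))
    (hh₁₁ : h₁₁ ∈ Set.Ioc (1 : ℝ) 2) (hh₁₂ : h₁₂ ∈ Set.Ioc (1 : ℝ) 2)
    (hh₂₁ : h₂₁ ∈ Set.Ioc (1 : ℝ) 2) (hh₂₂ : h₂₂ ∈ Set.Ioc (1 : ℝ) 2) :
    ∀ η > (0 : ℝ), ∃ P₀ > (1 : ℝ), ∀ P ≥ P₀,
      ∀ (Ω : Type) (_ : MeasurableSpace Ω) (μ : Measure Ω) (_ : IsProbabilityMeasure μ)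
        (v₁c v₂c u₁ u₂ z₁ : Ω → ℝ),
        Measurable v₁c → Measurable v₂c → Measurable u₁ → Measurable u₂ → Measurable z₁ →
        Measure.map v₁c μ
          = uniformOn (PAM (2 * γ / P ^ ((2 - α - ε) / 2)) (P ^ ((2 - α - ε) / 2))) →
        Measure.map v₂c μ
          = uniformOn (PAM (2 * γ / P ^ ((2 - α - ε) / 2)) (P ^ ((2 - α - ε) / 2))) →
        Measure.map u₁ μ
          = uniformOn (PAM (2 * γ / P ^ ((2 - α - ε) / 2)) (P ^ ((2 - α - ε) / 2))) →
        Measure.map u₂ μ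
          = uniformOn (PAM (2 * γ / P ^ ((2 - α - ε) / 2)) (P ^ ((2 - α - ε) / 2))) →
        Measure.map z₁ μ = gaussianReal 0 1 →
        iIndepFun (m := fun _ : Fin 5 => (inferInstance : MeasurableSpace ℝ))
          ![v₁c, v₂c, u₁, u₂, z₁] μ →
        ∃ f : ℝ → ℝ, Measurable f ∧
          μ {ω | f (Real.sqrt (P ^ (2 - α)) * (h₁₁ * h₂₂) * v₁c ω
                    + Real.sqrt P * (h₁₂ * h₁₁) * (v₂c ω + u₁ ω)
                    + Real.sqrt (P ^ α) * (h₁₂ * h₂₁) * u₂ ω + z₁ ω)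
                  = v₁c ω}
            > ENNReal.ofReal (1 - η) := by
  obtain ⟨hh₁₁l, hh₁₁u⟩ := hh₁₁
  obtain ⟨hh₁₂l, hh₁₂u⟩ := hh₁₂
  obtain ⟨hh₂₁l, hh₂₁u⟩ := hh₂₁
  obtain ⟨hh₂₂l, hh₂₂u⟩ := hh₂₂
  intro η hη
  obtain ⟨n, hn⟩ := gauss_exists η hη
  set M : ℝ := max (max 48 ((n:ℝ)/γ)) 1 with hM
  have hM1 : (1:ℝ) ≤ M := le_max_right _ _
  have hM0 : (0:ℝ) ≤ M := by linarith
  refine ⟨max 16 (M ^ ((2:ℝ)/ε)), lt_of_lt_of_le (by norm_num) (le_max_left _ _), ?_⟩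
  intro P hP Ω mΩ μ hμ v₁c v₂c u₁ u₂ z₁ hmv₁ hmv₂ hmu₁ hmu₂ hmz hv₁ hv₂ hu₁ hu₂ hz _hind
  have hP16 : (16:ℝ) ≤ P := le_trans (le_max_left _ _) hP
  have hP1 : (1:ℝ) < P := by linarith
  have hP0 : (0:ℝ) < P := by linarith
  have hMP : M ≤ P ^ (ε/2) := by
    have h1 : M ^ ((2:ℝ)/ε) ≤ P := le_trans (le_max_right _ _) hP
    have h2 : (M ^ ((2:ℝ)/ε)) ^ (ε/2) ≤ P ^ (ε/2) :=
      Real.rpow_le_rpow (by positivity) h1 (by positivity)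
    have h3 : ((2:ℝ)/ε) * (ε/2) = 1 := by field_simp
    rwa [← Real.rpow_mul hM0, h3, Real.rpow_one] at h2
  have hP48 : (48:ℝ) ≤ P ^ (ε/2) :=
    le_trans (le_trans (le_max_left _ _) (le_max_left _ _)) hMP
  have hPn : (n:ℝ) ≤ γ * P ^ (ε/2) := by
    have h1 : (n:ℝ)/γ ≤ P ^ (ε/2) :=
      le_trans (le_trans (le_max_right _ _) (le_max_left _ _)) hMP
    rw [div_le_iff₀ hγ₁] at h1
    linarith
  -- abbreviations
  set Qv : ℝ := P ^ ((2 - α - ε) / 2) with hQvdef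
  have hQv0 : 0 < Qv := rpow_pos_of_pos hP0 _
  set ξ : ℝ := 2 * γ / Qv with hξdef
  have hξ0 : 0 < ξ := by positivity
  set S : Set ℝ := PAM ξ Qv with hSdef
  have hSfin : S.Finite := PAM_finite _ _
  have hSmeas : MeasurableSet S := hSfin.measurableSet
  have h0S : (0:ℝ) ∈ S := ⟨0, by simp, by push_cast; linarith, by push_cast; linarith⟩
  set r : ℝ := γ * P ^ (ε/2) with hrdef
  have hr0 : 0 < r := by positivity
  -- rpow rewrites for square roots
  have hsq1 : Real.sqrt (P ^ (2 - α)) = P ^ ((2-α)/2) := by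
    rw [Real.sqrt_eq_rpow, ← Real.rpow_mul hP0.le]
    congr 1; ring
  have hsq2 : Real.sqrt P = P ^ ((1:ℝ)/2) := Real.sqrt_eq_rpow P
  have hsq3 : Real.sqrt (P ^ α) = P ^ (α/2) := by
    rw [Real.sqrt_eq_rpow, ← Real.rpow_mul hP0.le]
    congr 1; ring
  -- the constellation
  set c₁ : ℝ := Real.sqrt (P ^ (2 - α)) * (h₁₁ * h₂₂) with hc₁def
  set c₂ : ℝ := Real.sqrt P * (h₁₂ * h₁₁) with hc₂def
  set c₃ : ℝ := Real.sqrt (P ^ α) * (h₁₂ * h₂₁) with hc₃def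
  set spt : ℤ → ℤ → ℤ → ℝ :=
    fun a b c => c₁ * (ξ * a) + c₂ * (ξ * b) + c₃ * (ξ * c) with hsptdef
  set A : Finset ℤ := Finset.Icc ⌈-Qv⌉ ⌊Qv⌋ with hAdef
  set B : Finset ℤ := Finset.Icc ⌈-(2*Qv)⌉ ⌊2*Qv⌋ with hBdef
  have hAbound : ∀ a ∈ A, |(a:ℝ)| ≤ Qv := by
    intro a ha
    rw [hAdef, Finset.mem_Icc] at ha
    rw [abs_le]
    exact ⟨Int.ceil_le.1 ha.1, Int.le_floor.1 ha.2⟩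
  have hBbound : ∀ b ∈ B, |(b:ℝ)| ≤ 2 * Qv := by
    intro b hb
    rw [hBdef, Finset.mem_Icc] at hb
    rw [abs_le]
    exact ⟨Int.ceil_le.1 hb.1, Int.le_floor.1 hb.2⟩
  set U : ℤ → Set ℝ :=
    fun a => ⋃ b ∈ (B : Set ℤ), ⋃ c ∈ (A : Set ℤ), Metric.ball (spt a b c) r with hUdef
  have hUm : ∀ a, MeasurableSet (U a) := by
    intro a
    exact MeasurableSet.biUnion (B : Set ℤ).to_countable fun b _ =>
      MeasurableSet.biUnion (A : Set ℤ).to_countable fun c _ => measurableSet_ball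
  set f : ℝ → ℝ :=
    fun x => ∑ a ∈ A, (ξ * a) * Set.indicator (U a) (fun _ => (1:ℝ)) x with hfdef
  have hfm : Measurable f := by
    apply Finset.measurable_sum
    intro a _
    exact ((measurable_const.indicator (hUm a)).const_mul _)
  -- separation
  have hsep : ∀ a b c a' b' c' : ℤ, a ∈ A → b ∈ B → c ∈ A →
      a' ∈ A → b' ∈ B → c' ∈ A → a ≠ a' →
      2 * r ≤ |spt a b c - spt a' b' c'| := by
    intro a b c a' b' c' ha hb hc ha' hb' hc' hne
    have hdiff : spt a b c - spt a' b' c' =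
        ξ * (P ^ ((2-α)/2) * (h₁₁*h₂₂) * ((a:ℝ) - (a':ℝ))
          + P ^ ((1:ℝ)/2) * (h₁₂*h₁₁) * ((b:ℝ) - (b':ℝ))
          + P ^ (α/2) * (h₁₂*h₂₁) * ((c:ℝ) - (c':ℝ))) := by
      rw [hsptdef]
      simp only [hc₁def, hc₂def, hc₃def, hsq1, hsq2, hsq3]
      ring
    have hkey := key_mindist α ε P hα₁ hα₂ hε hP16 hP48
      (h₁₁*h₂₂) (h₁₂*h₁₁) (h₁₂*h₂₁)
      (by nlinarith) (by nlinarith) (by nlinarith) (by nlinarith) (by nlinarith) (by nlinarith)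
      ((a:ℝ) - a') ((b:ℝ) - b') ((c:ℝ) - c')
      ?_ ?_ ?_ ?_ ?_ ?_
    · have h2r : 2 * r = ξ * P ^ ((2-α)/2) := by
        rw [hrdef, hξdef, hQvdef, div_mul_eq_mul_div, mul_div_assoc,
          ← Real.rpow_sub hP0, show (2-α)/2 - (2-α-ε)/2 = ε/2 by ring]
        ring
      rw [hdiff, abs_mul, abs_of_pos hξ0, h2r]
      exact mul_le_mul_of_nonneg_left hkey hξ0.le
    · -- 1 ≤ |a - a'|
      have : (1:ℤ) ≤ |a - a'| := Int.one_le_abs (sub_ne_zero.2 hne)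
      calc (1:ℝ) ≤ ((|a - a'| : ℤ) : ℝ) := by exact_mod_cast this
        _ = |(a:ℝ) - a'| := by push_cast; ring_nf
    · calc |(a:ℝ) - a'| ≤ |(a:ℝ)| + |(a':ℝ)| := abs_sub _ _
        _ ≤ 2 * Qv := by
            have h1 := hAbound a ha; have h2 := hAbound a' ha'; linarith
    · -- b - b' zero or ≥ 1
      by_cases hbb : b = b'
      · left; rw [hbb]; ring
      · right
        have : (1:ℤ) ≤ |b - b'| := Int.one_le_abs (sub_ne_zero.2 hbb)
        calc (1:ℝ) ≤ ((|b - b'| : ℤ) : ℝ) := by exact_mod_cast this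
          _ = |(b:ℝ) - b'| := by push_cast; ring_nf
    · calc |(b:ℝ) - b'| ≤ |(b:ℝ)| + |(b':ℝ)| := abs_sub _ _
        _ ≤ 4 * Qv := by
            have h1 := hBbound b hb; have h2 := hBbound b' hb'; linarith
      -- and bound: need ≤ 4 * P^((2-α-ε)/2) = 4 * Qv, defeq by hQvdef
    · by_cases hcc : c = c'
      · left; rw [hcc]; ring
      · right
        have : (1:ℤ) ≤ |c - c'| := Int.one_le_abs (sub_ne_zero.2 hcc)
        calc (1:ℝ) ≤ ((|c - c'| : ℤ) : ℝ) := by exact_mod_cast this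
          _ = |(c:ℝ) - c'| := by push_cast; ring_nf
    · calc |(c:ℝ) - c'| ≤ |(c:ℝ)| + |(c':ℝ)| := abs_sub _ _
        _ ≤ 2 * Qv := by
            have h1 := hAbound c hc; have h2 := hAbound c' hc'; linarith
  -- correctness of the decoder on the good event
  have hcorrect : ∀ ω : Ω, v₁c ω ∈ S → v₂c ω ∈ S → u₁ ω ∈ S → u₂ ω ∈ S →
      |z₁ ω| < r →
      f (c₁ * v₁c ω + c₂ * (v₂c ω + u₁ ω) + c₃ * u₂ ω + z₁ ω) = v₁c ω := by
    intro ω hv1 hv2 hu1 hu2 hzr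
    obtain ⟨a₀, hva, ha₁, ha₂⟩ := hv1
    obtain ⟨b₂, hvb2, hb₂₁, hb₂₂⟩ := hv2
    obtain ⟨b₃, hvb3, hb₃₁, hb₃₂⟩ := hu1
    obtain ⟨c₀, hvc, hc₁', hc₂'⟩ := hu2
    have ha₀A : a₀ ∈ A := by
      rw [hAdef, Finset.mem_Icc]
      exact ⟨Int.ceil_le.2 (by simpa using ha₁), Int.le_floor.2 ha₂⟩
    have hc₀A : c₀ ∈ A := by
      rw [hAdef, Finset.mem_Icc]
      exact ⟨Int.ceil_le.2 (by simpa using hc₁'), Int.le_floor.2 hc₂'⟩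
    have hb₀B : b₂ + b₃ ∈ B := by
      rw [hBdef, Finset.mem_Icc]
      constructor
      · apply Int.ceil_le.2; push_cast; linarith
      · apply Int.le_floor.2; push_cast; linarith
    set x : ℝ := c₁ * v₁c ω + c₂ * (v₂c ω + u₁ ω) + c₃ * u₂ ω + z₁ ω with hxdef
    have hx : x = spt a₀ (b₂ + b₃) c₀ + z₁ ω := by
      rw [hxdef, hsptdef, hva, hvb2, hvb3, hvc]
      push_cast
      ring
    have hdist : ∀ a b c : ℤ, dist x (spt a b c) = |spt a b c - x| := by
      intro a b c; rw [Real.dist_eq, abs_sub_comm]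
    have hmem : x ∈ U a₀ := by
      rw [hUdef]
      apply Set.mem_biUnion (by exact_mod_cast hb₀B)
      apply Set.mem_biUnion (by exact_mod_cast hc₀A)
      rw [Metric.mem_ball, Real.dist_eq, hx]
      simpa using hzr
    have hnot : ∀ a ∈ A, a ≠ a₀ → x ∉ U a := by
      intro a haA hne hmemU
      rw [hUdef] at hmemU
      simp only [Set.mem_iUnion, exists_prop] at hmemU
      obtain ⟨b, hbB, c, hcA, hball⟩ := hmemU
      rw [Metric.mem_ball, Real.dist_eq] at hball
      have hsep' := hsep a b c a₀ (b₂ + b₃) c₀ haA (by exact_mod_cast hbB)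
        (by exact_mod_cast hcA) ha₀A hb₀B hc₀A hne
      have h1 : |spt a b c - spt a₀ (b₂+b₃) c₀| ≤ |x - spt a b c| + |x - spt a₀ (b₂+b₃) c₀| := by
        have := abs_sub (x - spt a₀ (b₂+b₃) c₀) (x - spt a b c)
        calc |spt a b c - spt a₀ (b₂+b₃) c₀|
            = |(x - spt a₀ (b₂+b₃) c₀) - (x - spt a b c)| := by ring_nf
          _ ≤ |x - spt a₀ (b₂+b₃) c₀| + |x - spt a b c| := abs_sub _ _
          _ = |x - spt a b c| + |x - spt a₀ (b₂+b₃) c₀| := by ring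
      have h2 : |x - spt a₀ (b₂+b₃) c₀| < r := by rw [hx]; simpa using hzr
      linarith
    have hfx : f x = ∑ a ∈ A, ξ * (a:ℝ) * Set.indicator (U a) (fun _ => (1:ℝ)) x := rfl
    rw [hfx, Finset.sum_eq_single_of_mem a₀ ha₀A]
    · rw [Set.indicator_of_mem hmem, hva]; ring
    · intro a haA hne
      rw [Set.indicator_of_notMem (hnot a haA hne)]; ring
  -- measure-one sets
  have hone : ∀ (X : Ω → ℝ), Measurable X → Measure.map X μ = uniformOn S →
      μ (X ⁻¹' S)ᶜ = 0 := by
    intro X hX hmap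
    have h1 : μ (X ⁻¹' S) = 1 := by
      rw [← Measure.map_apply hX hSmeas, hmap]
      exact uniformOn_self hSfin ⟨0, h0S⟩
    exact (prob_compl_eq_zero_iff (hX hSmeas)).2 h1
  have hv₁0 := hone v₁c hmv₁ hv₁
  have hv₂0 := hone v₂c hmv₂ hv₂
  have hu₁0 := hone u₁ hmu₁ hu₁
  have hu₂0 := hone u₂ hmu₂ hu₂
  set T : Set Ω := (v₁c ⁻¹' S) ∩ ((v₂c ⁻¹' S) ∩ ((u₁ ⁻¹' S) ∩ (u₂ ⁻¹' S))) with hTdef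
  have hT0 : μ Tᶜ = 0 := by
    rw [hTdef, Set.compl_inter, Set.compl_inter, Set.compl_inter]
    exact measure_union_null hv₁0 (measure_union_null hv₂0 (measure_union_null hu₁0 hu₂0))
  have hZgauss : ENNReal.ofReal (1 - η) < μ (z₁ ⁻¹' Set.Ioo (-r) r) := by
    rw [← Measure.map_apply hmz measurableSet_Ioo, hz]
    refine lt_of_lt_of_le hn (measure_mono ?_)
    refine Set.Ioo_subset_Ioo ?_ ?_
    · have : (n:ℝ) ≤ r := hPn
      linarith
    · exact hPn
  refine ⟨f, hfm, ?_⟩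
  have hfinal : μ ((z₁ ⁻¹' Set.Ioo (-r) r) ∩ T) = μ (z₁ ⁻¹' Set.Ioo (-r) r) :=
    measure_inter_conull hT0
  have hsub : (z₁ ⁻¹' Set.Ioo (-r) r) ∩ T ⊆
      {ω | f (c₁ * v₁c ω + c₂ * (v₂c ω + u₁ ω) + c₃ * u₂ ω + z₁ ω) = v₁c ω} := by
    rintro ω ⟨hωz, hω1, hω2, hω3, hω4⟩
    have hzr : |z₁ ω| < r := abs_lt.2 ⟨(Set.mem_Ioo.1 hωz).1, (Set.mem_Ioo.1 hωz).2⟩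
    exact hcorrect ω hω1 hω2 hω3 hω4 hzr
  calc ENNReal.ofReal (1 - η) < μ (z₁ ⁻¹' Set.Ioo (-r) r) := hZgauss
    _ = μ ((z₁ ⁻¹' Set.Ioo (-r) r) ∩ T) := hfinal.symm
    _ ≤ _ := measure_mono hsub
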